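/- Let A → B₀ → B be non-expansive homomorphisms of seminormed commutative rings such that the image of B₀ → B is dense in B. Then the image of the canonical homomorphism Ω_{B₀/A} ⊗_{B₀} B → Ω_{B/A} is dense in Ω_{B/A} with respect to the Kähler seminorm: for every x ∈ Ω_{B/A} and every ε > 0 there is an element y in the image with ‖x − y‖_Ω < ε. -/

import Mathlib

open scoped NNReal TensorProduct

/-- A (nonarchimedean) seminorm on an additive group. -/
def IsGroupSeminorm {M : Type*} [AddCommGroup M] (f : M → ℝ≥0) : Prop :=
  f 0 = 0 ∧ ∀ x y : M, f (x - y) ≤ max (f x) (f y)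

/-- A seminorm on a commutative ring. -/
def IsRingSeminorm {A : Type*} [CommRing A] (f : A → ℝ≥0) : Prop :=
  IsGroupSeminorm f ∧ f 1 = 1 ∧ ∀ x y : A, f (x * y) ≤ f x * f y

/-- The Kähler seminorm on `Ω[B⁄A]` induced by a seminorm `vB` on `B`. -/
noncomputable def kahlerSeminorm (A B : Type*) [CommRing A] [CommRing B] [Algebra A B]
    (vB : B → ℝ≥0) (x : Ω[B⁄A]) : ℝ≥0 :=
  sInf { r | ∃ (n : ℕ) (c b : Fin n → B),
    x = ∑ i, c i • KaehlerDifferential.D A B (b i) ∧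
    r = Finset.univ.sup fun i => vB (c i) * vB (b i) }

/-- Given non-expansive homomorphisms `A → B₀ → B` of seminormed rings with the image of
`B₀ → B` dense in `B`, the image of the canonical homomorphism
`Ω_{B₀/A} ⊗_{B₀} B → Ω_{B/A}` (characterized by `(c • d b₀) ⊗ b ↦ (b * c) • d b₀` in `Ω_{B/A}`)
is dense in `Ω_{B/A}` for the Kähler seminorm. -/
theorem kahlerSeminorm_denseRange_of_denseRange
    {A B₀ B : Type*} [CommRing A] [CommRing B₀] [CommRing B]
    [Algebra A B₀] [Algebra A B] [Algebra B₀ B] [IsScalarTower A B₀ B]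
    (vA : A → ℝ≥0) (vB₀ : B₀ → ℝ≥0) (vB : B → ℝ≥0)
    (hA : IsRingSeminorm vA) (hB₀ : IsRingSeminorm vB₀) (hB : IsRingSeminorm vB)
    (hAB₀ : ∀ a : A, vB₀ (algebraMap A B₀ a) ≤ vA a)
    (hB₀B : ∀ a : B₀, vB (algebraMap B₀ B a) ≤ vB₀ a)
    (hdense : ∀ (b : B) (ε : ℝ≥0), 0 < ε → ∃ a : B₀, vB (b - algebraMap B₀ B a) < ε)
    (Φ : TensorProduct B₀ (Ω[B₀⁄A]) B →+ Ω[B⁄A])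
    (hΦ : ∀ (c b₀ : B₀) (b : B),
      Φ ((c • KaehlerDifferential.D A B₀ b₀) ⊗ₜ[B₀] b)
        = (b * algebraMap B₀ B c) • KaehlerDifferential.D A B (algebraMap B₀ B b₀)) :
    ∀ (x : Ω[B⁄A]) (ε : ℝ≥0), 0 < ε →
      ∃ z, kahlerSeminorm A B vB (x - Φ z) < ε := by

  intro x ε hε
  set ι := algebraMap B₀ B with hι
  -- write x as a finite combination of differentials
  have hx : x ∈ Submodule.span B (Set.range (KaehlerDifferential.D A B)) := by
    rw [KaehlerDifferential.span_range_derivation]; trivial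
  obtain ⟨n, c, g, hg⟩ := Submodule.mem_span_set'.mp hx
  choose b hb using fun i => (g i).2
  have hx' : x = ∑ i, c i • KaehlerDifferential.D A B (b i) := by
    rw [← hg]; exact Finset.sum_congr rfl fun i _ => by rw [hb]
  -- approximate b i
  have hd1 : ∀ i : Fin n, (0 : ℝ≥0) < ε / (vB (c i) + 1) := by
    intro i
    exact pos_iff_ne_zero.mpr (div_ne_zero hε.ne' (by positivity))
  choose a ha using fun i => hdense (b i) _ (hd1 i)
  -- approximate c i
  have hM : ∀ i : Fin n, (0 : ℝ≥0) < max (vB (b i)) ε := fun i => lt_max_of_lt_right hε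
  have hd2 : ∀ i : Fin n, (0 : ℝ≥0) < ε / max (vB (b i)) ε := by
    intro i
    exact pos_iff_ne_zero.mpr (div_ne_zero hε.ne' (hM i).ne')
  choose e he using fun i => hdense (c i) _ (hd2 i)
  -- the approximation in the tensor product
  refine ⟨∑ i, (e i • KaehlerDifferential.D A B₀ (a i)) ⊗ₜ[B₀] (1 : B), ?_⟩
  have hΦz : Φ (∑ i, (e i • KaehlerDifferential.D A B₀ (a i)) ⊗ₜ[B₀] (1 : B))
      = ∑ i, ι (e i) • KaehlerDifferential.D A B (ι (a i)) := by
    rw [map_sum]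
    exact Finset.sum_congr rfl fun i _ => by rw [hΦ, one_mul]
  -- the difference as a combination with small coefficients
  set c' : Fin (n + n) → B := Fin.append c (fun i => c i - ι (e i)) with hc'
  set b' : Fin (n + n) → B := Fin.append (fun i => b i - ι (a i)) (fun i => ι (a i)) with hb'
  have hrep : x - Φ (∑ i, (e i • KaehlerDifferential.D A B₀ (a i)) ⊗ₜ[B₀] (1 : B))
      = ∑ j, c' j • KaehlerDifferential.D A B (b' j) := by
    rw [hΦz, hx', Fin.sum_univ_add]
    simp only [hc', hb', Fin.append_left, Fin.append_right]
    rw [← Finset.sum_sub_distrib, ← Finset.sum_add_distrib]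
    refine Finset.sum_congr rfl fun i _ => ?_
    rw [map_sub, smul_sub, sub_smul]
    abel
  -- bound each term
  have hbound : ∀ j : Fin (n + n), vB (c' j) * vB (b' j) < ε := by
    intro j
    refine Fin.addCases ?_ ?_ j
    · intro i
      simp only [hc', hb', Fin.append_left]
      calc vB (c i) * vB (b i - ι (a i))
          ≤ (vB (c i) + 1) * vB (b i - ι (a i)) :=
            mul_le_mul_left le_self_add _
        _ < (vB (c i) + 1) * (ε / (vB (c i) + 1)) :=
            mul_lt_mul_of_pos_left (ha i) (by positivity)
        _ = ε := mul_div_cancel₀ _ (by positivity)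
    · intro i
      simp only [hc', hb', Fin.append_right]
      have h1 : vB (ι (a i)) ≤ max (vB (b i)) ε := by
        have : ι (a i) = b i - (b i - ι (a i)) := by ring
        rw [this]
        refine le_trans (hB.1.2 _ _) (max_le_max le_rfl ?_)
        refine le_trans (ha i).le ?_
        rw [div_le_iff₀ (by positivity)]
        exact le_mul_of_one_le_right zero_le le_add_self
      calc vB (c i - ι (e i)) * vB (ι (a i))
          ≤ vB (c i - ι (e i)) * max (vB (b i)) ε := mul_le_mul_right h1 _
        _ < (ε / max (vB (b i)) ε) * max (vB (b i)) ε :=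
            mul_lt_mul_of_pos_right (he i) (hM i)
        _ = ε := div_mul_cancel₀ _ (hM i).ne'
  -- conclude
  refine lt_of_le_of_lt (csInf_le (OrderBot.bddBelow _)
    ⟨n + n, c', b', hrep, rfl⟩) ?_
  rw [Finset.sup_lt_iff (by simpa using hε)]
  exact fun j _ => hbound j
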